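/- If I is a normal ideal on Z ⊆ 𝒫(λ) and ⟨C_α : α < λ⟩ are I-positive sets with C_α ⊆ α̂ for each α, and C = ∇_{α < λ} C_α, then: if I↾C_β is λ⁺-saturated for each β and every antichain in 𝒫(C)/I of size λ⁺ intersects some C_β in λ⁺-many positive pieces, then I↾C is λ⁺-saturated. More precisely: if ⟨D_ξ : ξ < λ⁺⟩ is an antichain below C in 𝒫(Z)/I, then there is β < λ such that C_β ∩ D_ξ ∈ I⁺ for λ⁺-many ξ, contradicting λ⁺-saturation of I↾C_β; hence if each I↾C_β is λ⁺-saturated, so is I↾C. -/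

import Mathlib

open Cardinal Set

/-- `I` is a (nonprincipal, proper) ideal on the set `Z` of points of type `P`. -/
structure IdealOn {P : Type*} (Z : Set P) (I : Set (Set P)) : Prop where
  mono : ∀ {A B : Set P}, A ⊆ B → B ∈ I → A ∈ I
  union : ∀ {A B : Set P}, A ∈ I → B ∈ I → A ∪ B ∈ I
  subset_Z : ∀ A ∈ I, A ⊆ Z
  nonprincipal : ∀ z ∈ Z, {z} ∈ I
  proper : Z ∉ I

/-- `A` is an `I`-positive subset of `Z`. -/
def Pos {P : Type*} (Z : Set P) (I : Set (Set P)) (A : Set P) : Prop := A ⊆ Z ∧ A ∉ I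

/-- The restricted ideal `I ↾ A = {B : B ∩ A ∈ I}`. -/
def restrict {P : Type*} (I : Set (Set P)) (A : Set P) : Set (Set P) := {B | B ∩ A ∈ I}

/-- The restricted ideal `I ↾ A`, as an ideal on `Z` (members required to be `⊆ Z`). -/
def restrictOn {P : Type*} (Z : Set P) (I : Set (Set P)) (A : Set P) : Set (Set P) :=
  {B | B ⊆ Z ∧ B ∩ A ∈ I}

/-- `I` is `κ`-complete: closed under unions of length `< κ`. -/
def Complete {P : Type*} (I : Set (Set P)) (κ : Cardinal.{0}) : Prop :=
  ∀ (o : Ordinal.{0}) (f : Ordinal.{0} → Set P), o < κ.ord → (∀ i < o, f i ∈ I) →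
    (⋃ i ∈ Set.Iio o, f i) ∈ I

/-- `I` is `δ`-saturated: there is no `δ`-sequence of `I`-positive sets that are
pairwise almost disjoint modulo `I`. -/
def Saturated {P : Type*} (Z : Set P) (I : Set (Set P)) (δ : Cardinal.{0}) : Prop :=
  ¬ ∃ f : Ordinal.{0} → Set P, (∀ i < δ.ord, Pos Z I (f i)) ∧
      ∀ i j, i < δ.ord → j < δ.ord → i ≠ j → f i ∩ f j ∈ I

/-- The set `x` of ordinals has order type `a`. -/
def HasOtype (x : Set Ordinal.{0}) (a : Ordinal.{0}) : Prop :=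
  Nonempty ((Subrel ((· < ·) : Ordinal → Ordinal → Prop) x) ≃r
    (Subrel ((· < ·) : Ordinal → Ordinal → Prop) (Set.Iio a)))

/-- The set `x` of ordinals has order type at least `a`. -/
def OtypeGE (x : Set Ordinal.{0}) (a : Ordinal.{0}) : Prop :=
  Nonempty ((Subrel ((· < ·) : Ordinal → Ordinal → Prop) (Set.Iio a)) ↪r
    (Subrel ((· < ·) : Ordinal → Ordinal → Prop) x))

/-- `I` is `(a,b)`-regular: every `b`-sequence of positive sets has a positive refinement
with empty intersections along index sets of order type `a`. -/
def Regular2 {P : Type*} (Z : Set P) (I : Set (Set P)) (a b : Ordinal.{0}) : Prop :=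
  ∀ A : Ordinal.{0} → Set P, (∀ i < b, Pos Z I (A i)) →
    ∃ B : Ordinal.{0} → Set P,
      (∀ i < b, B i ⊆ A i ∧ Pos Z I (B i)) ∧
      ∀ x : Set Ordinal.{0}, x ⊆ Set.Iio b → HasOtype x a → ⋂ i ∈ x, B i = ∅

/-- `I` is `(a,b,c)`-regular: every `c`-sequence of positive sets has a positive refinement
whose intersections along index sets of order type `b` have cardinality at most `a`. -/
def Regular3 {P : Type u} (Z : Set P) (I : Set (Set P)) (a : Cardinal.{u}) (b c : Ordinal.{0}) :
    Prop :=
  ∀ A : Ordinal.{0} → Set P, (∀ i < c, Pos Z I (A i)) →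
    ∃ B : Ordinal.{0} → Set P,
      (∀ i < c, B i ⊆ A i ∧ Pos Z I (B i)) ∧
      ∀ x : Set Ordinal.{0}, x ⊆ Set.Iio c → HasOtype x b → #↥(⋂ i ∈ x, B i) ≤ a

/-- Normality of an ideal on `Z ⊆ 𝒫(lam)` (points are sets of ordinals `< lam`):
each `x̂ = {z : x ∈ z}` is measure one, and every regressive function on a positive
set is constant on a positive set. -/
structure NormalP (lam : Ordinal.{0}) (Z : Set (Set Ordinal.{0}))
    (I : Set (Set (Set Ordinal.{0}))) : Prop where
  hat : ∀ x < lam, {z ∈ Z | x ∉ z} ∈ I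
  regress : ∀ (A : Set (Set Ordinal.{0})) (f : Set Ordinal.{0} → Ordinal.{0}),
    Pos Z I A → (∀ z ∈ A, f z ∈ z) →
    ∃ x, ∃ B ⊆ A, Pos Z I B ∧ ∀ z ∈ B, f z = x

/-- Normality of an ideal on `Z ⊆ 𝒫(X)` for an abstract set `X`. -/
structure NormalOn {X : Type*} (Z : Set (Set X)) (I : Set (Set (Set X))) : Prop where
  hat : ∀ x : X, {z ∈ Z | x ∉ z} ∈ I
  regress : ∀ (A : Set (Set X)) (f : Set X → X),
    Pos Z I A → (∀ z ∈ A, f z ∈ z) →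
    ∃ x, ∃ B ⊆ A, Pos Z I B ∧ ∀ z ∈ B, f z = x

/-- `𝒫_κ(lam)`, as the collection of sets of ordinals below `lam` of size `< κ`. -/
def Pkl (κ : Cardinal.{0}) (lam : Ordinal.{0}) : Set (Set Ordinal.{0}) :=
  {z | z ⊆ Set.Iio lam ∧ #↥z < Cardinal.lift.{1} κ}
/-- Let `I` be a normal ideal on `Z ⊆ 𝒫(λ)` and `⟨C_α : α < λ⟩` positive sets
with `C_α ⊆ α̂`, and let `C = ∇_α C_α`.  Then: (a) for every antichain `⟨D_ξ : ξ < λ⁺⟩` below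
`C` there is `β < λ` with `C_β ∩ D_ξ ∈ I⁺` for `λ⁺`-many `ξ`; hence (b) if each `I ↾ C_β` is
`λ⁺`-saturated, then `I ↾ C` is `λ⁺`-saturated. -/
theorem stmt16 (lam : Cardinal.{0})
    (Z : Set (Set Ordinal.{0})) (hZ : Z = {z | z ⊆ Set.Iio lam.ord})
    (I : Set (Set (Set Ordinal.{0})))
    (hI : IdealOn Z I) (hnorm : NormalP lam.ord Z I)
    (C : Ordinal → Set (Set Ordinal.{0}))
    (hC : ∀ α < lam.ord, Pos Z I (C α) ∧ C α ⊆ {z ∈ Z | α ∈ z}) :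
    (∀ D : Ordinal → Set (Set Ordinal.{0}),
      (∀ ξ < (Order.succ lam).ord, Pos Z I (D ξ) ∧
        D ξ ⊆ ⋃ α ∈ Set.Iio lam.ord, C α ∩ {z ∈ Z | α ∈ z}) →
      (∀ ξ ζ, ξ < (Order.succ lam).ord → ζ < (Order.succ lam).ord → ξ ≠ ζ →
        D ξ ∩ D ζ ∈ I) →
      ∃ β < lam.ord,
        #↥{ξ : Ordinal.{0} | ξ < (Order.succ lam).ord ∧ C β ∩ D ξ ∉ I} =
          Cardinal.lift.{1} (Order.succ lam)) ∧
    ((∀ β < lam.ord, Saturated Z (restrict I (C β)) (Order.succ lam)) →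
      Saturated Z (restrict I (⋃ α ∈ Set.Iio lam.ord, C α ∩ {z ∈ Z | α ∈ z}))
        (Order.succ lam)) := by
  classical
  -- `lam` must be infinite, else `Z` is finite and `I` cannot be proper.
  have hinf : ℵ₀ ≤ lam := by
    by_contra hfin
    push_neg at hfin
    have hIiofin : (Set.Iio lam.ord).Finite := by
      rw [← Set.finite_coe_iff, ← Cardinal.mk_lt_aleph0_iff, Ordinal.mk_Iio_ordinal,
        Cardinal.card_ord]
      exact Cardinal.lift_lt_aleph0.2 hfin
    have hZfin : Z.Finite := by
      rw [hZ]; exact hIiofin.finite_subsets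
    have key : ∀ s : Set (Set Ordinal.{0}), s.Finite → s ⊆ Z → s ∈ I := by
      intro s hs
      refine Set.Finite.induction_on s hs ?_ ?_
      · intro _
        have hEmptyZ : (∅ : Set Ordinal.{0}) ∈ Z := by
          rw [hZ]; exact Set.empty_subset _
        exact hI.mono (Set.empty_subset _) (hI.nonprincipal ∅ hEmptyZ)
      · intro a s _ _ ih hsub
        rw [Set.insert_eq]
        exact hI.union (hI.nonprincipal a (hsub (Set.mem_insert a s)))
          (ih fun x hx => hsub (Set.subset_insert a s hx))
    exact hI.proper (key Z hZfin subset_rfl)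
  have hEmptyZ : (∅ : Set Ordinal.{0}) ∈ Z := by rw [hZ]; exact Set.empty_subset _
  have hEmptyI : (∅ : Set (Set Ordinal.{0})) ∈ I :=
    hI.mono (Set.empty_subset _) (hI.nonprincipal ∅ hEmptyZ)
  set δ : Ordinal.{0} := (Order.succ lam).ord with hδ
  have hIioδ : #(Set.Iio δ) = Cardinal.lift.{1} (Order.succ lam) := by
    rw [Ordinal.mk_Iio_ordinal, Cardinal.card_ord]
  have hIiolam : #(Set.Iio lam.ord) = Cardinal.lift.{1} lam := by
    rw [Ordinal.mk_Iio_ordinal, Cardinal.card_ord]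
  have hlampos : (0 : Ordinal) < lam.ord :=
    lt_of_lt_of_le Ordinal.omega0_pos (by rw [← Cardinal.ord_aleph0]; exact Cardinal.ord_le_ord.2 hinf)
  have parta : ∀ D : Ordinal → Set (Set Ordinal.{0}),
      (∀ ξ < (Order.succ lam).ord, Pos Z I (D ξ) ∧
        D ξ ⊆ ⋃ α ∈ Set.Iio lam.ord, C α ∩ {z ∈ Z | α ∈ z}) →
      (∀ ξ ζ, ξ < (Order.succ lam).ord → ζ < (Order.succ lam).ord → ξ ≠ ζ →
        D ξ ∩ D ζ ∈ I) →
      ∃ β < lam.ord,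
        #↥{ξ : Ordinal.{0} | ξ < (Order.succ lam).ord ∧ C β ∩ D ξ ∉ I} =
          Cardinal.lift.{1} (Order.succ lam) := by
    intro D hD _
    -- For each `ξ`, normality yields `β < lam.ord` with `C β ∩ D ξ` positive.
    have hg : ∀ ξ < δ, ∃ β < lam.ord, C β ∩ D ξ ∉ I := by
      intro ξ hξ
      obtain ⟨hpos, hsub⟩ := hD ξ hξ
      set fch : Set Ordinal.{0} → Ordinal.{0} := fun z =>
        if h : ∃ α, α < lam.ord ∧ z ∈ C α ∧ α ∈ z then h.choose else 0 with hfch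
      have hfz : ∀ z ∈ D ξ, fch z < lam.ord ∧ z ∈ C (fch z) ∧ fch z ∈ z := by
        intro z hz
        have hx : ∃ α, α < lam.ord ∧ z ∈ C α ∧ α ∈ z := by
          rcases Set.mem_iUnion₂.1 (hsub hz) with ⟨α, hα, hmem⟩
          exact ⟨α, hα, hmem.1, hmem.2.2⟩
        rw [hfch]
        simp only [dif_pos hx]
        exact hx.choose_spec
      obtain ⟨x, B, hBsub, hBpos, hBconst⟩ :=
        hnorm.regress (D ξ) fch hpos (fun z hz => (hfz z hz).2.2)
      have hBne : B.Nonempty := by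
        rcases Set.eq_empty_or_nonempty B with rfl | h
        · exact absurd hEmptyI hBpos.2
        · exact h
      obtain ⟨z, hzB⟩ := hBne
      refine ⟨x, ?_, fun hIn => hBpos.2 (hI.mono ?_ hIn)⟩
      · rw [← hBconst z hzB]; exact (hfz z (hBsub hzB)).1
      · intro w hw
        exact ⟨by rw [← hBconst w hw]; exact (hfz w (hBsub hw)).2.1, hBsub hw⟩
    by_contra hcon
    push_neg at hcon
    set S : Ordinal → Set Ordinal.{0} :=
      fun β => {ξ : Ordinal.{0} | ξ < (Order.succ lam).ord ∧ C β ∩ D ξ ∉ I} with hS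
    have hle : ∀ β < lam.ord, #(S β) ≤ Cardinal.lift.{1} lam := by
      intro β hβ
      have h1 : #(S β) ≤ Cardinal.lift.{1} (Order.succ lam) := by
        rw [← hIioδ]
        exact Cardinal.mk_le_mk_of_subset fun ξ hξ => hξ.1
      have h2 : #(S β) < Cardinal.lift.{1} (Order.succ lam) :=
        lt_of_le_of_ne h1 (hcon β hβ)
      rw [Cardinal.lift_succ] at h2
      exact Order.lt_succ_iff.1 h2
    have hcover : Set.Iio δ ⊆ ⋃ β ∈ Set.Iio lam.ord, S β := by
      intro ξ hξ
      obtain ⟨β, hβ, hne⟩ := hg ξ hξ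
      exact Set.mem_biUnion hβ ⟨hξ, hne⟩
    have hne : Nonempty ↥(Set.Iio lam.ord) := ⟨⟨0, hlampos⟩⟩
    have hbad : Cardinal.lift.{1} (Order.succ lam) ≤ Cardinal.lift.{1} lam := by
      calc Cardinal.lift.{1} (Order.succ lam) = #(Set.Iio δ) := hIioδ.symm
        _ ≤ #(⋃ β ∈ Set.Iio lam.ord, S β) := Cardinal.mk_le_mk_of_subset hcover
        _ ≤ #(Set.Iio lam.ord) * ⨆ β : Set.Iio lam.ord, #(S β) :=
            Cardinal.mk_biUnion_le S (Set.Iio lam.ord)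
        _ ≤ Cardinal.lift.{1} lam * Cardinal.lift.{1} lam :=
            mul_le_mul' hIiolam.le (ciSup_le' fun β => hle β β.2)
        _ = Cardinal.lift.{1} lam := Cardinal.mul_eq_self (Cardinal.aleph0_le_lift.2 hinf)
    exact absurd hbad (not_le.2 (Cardinal.lift_lt.2 (Order.lt_succ lam)))
  refine ⟨parta, ?_⟩
  intro hsat
  rintro ⟨f, hfpos, hfanti⟩
  set Csup : Set (Set Ordinal.{0}) := ⋃ α ∈ Set.Iio lam.ord, C α ∩ {z ∈ Z | α ∈ z} with hCsup
  set D : Ordinal → Set (Set Ordinal.{0}) := fun ξ => f ξ ∩ Csup with hDdef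
  have hD : ∀ ξ < (Order.succ lam).ord, Pos Z I (D ξ) ∧ D ξ ⊆ Csup := by
    intro ξ hξ
    obtain ⟨hsubZ, hnotI⟩ := hfpos ξ hξ
    exact ⟨⟨fun z hz => hsubZ hz.1, hnotI⟩, fun z hz => hz.2⟩
  have hDanti : ∀ ξ ζ, ξ < (Order.succ lam).ord → ζ < (Order.succ lam).ord → ξ ≠ ζ →
      D ξ ∩ D ζ ∈ I := by
    intro ξ ζ hξ hζ hne
    have h1 : (f ξ ∩ f ζ) ∩ Csup ∈ I := hfanti ξ ζ hξ hζ hne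
    refine hI.mono ?_ h1
    rintro z ⟨⟨hz1, hzc⟩, hz2, -⟩
    exact ⟨⟨hz1, hz2⟩, hzc⟩
  obtain ⟨β, hβ, hcard⟩ := parta D hD hDanti
  set S : Set Ordinal.{0} := {ξ : Ordinal.{0} | ξ < (Order.succ lam).ord ∧ C β ∩ D ξ ∉ I}
    with hSdef
  have hequiv : Nonempty (↥(Set.Iio δ) ≃ ↥S) := by
    rw [← Cardinal.eq, hIioδ, hcard]
  obtain ⟨e⟩ := hequiv
  set F : Ordinal → Set (Set Ordinal.{0}) :=
    fun i => if h : i < δ then D (e ⟨i, h⟩) else ∅ with hF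
  refine hsat β hβ ⟨F, ?_, ?_⟩
  · intro i hi
    have hmem := (e ⟨i, hi⟩).2
    rw [hF]
    simp only [dif_pos (show i < δ from hi)]
    refine ⟨(hD _ hmem.1).1.1, fun hIn => hmem.2 (hI.mono ?_ hIn)⟩
    intro z hz
    exact ⟨hz.2, hz.1⟩
  · intro i j hi hj hij
    rw [hF]
    simp only [dif_pos (show i < δ from hi), dif_pos (show j < δ from hj)]
    have hne : (e ⟨i, hi⟩ : Ordinal) ≠ (e ⟨j, hj⟩ : Ordinal) := by
      intro h
      apply hij
      have := e.injective (Subtype.ext h)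
      exact congrArg Subtype.val this
    exact hI.mono (Set.inter_subset_left)
      (hDanti _ _ (e ⟨i, hi⟩).2.1 (e ⟨j, hj⟩).2.1 hne)
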